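/- Let (M, d) be a complete metric space, let W ⊆ M be a nonempty set, and let (y_k) be a sequence in M that is quasi-Fejér convergent to W. If some cluster point y of (y_k) (i.e., a limit of some subsequence of (y_k)) belongs to W, then the whole sequence (y_k) converges to y. -/

import Mathlib

/-- If a quasi-Fejér convergent sequence (to a nonempty set `W`, in a complete metric
space) has a cluster point belonging to `W`, then the whole sequence converges to it. -/
theorem quasiFejer_converges_of_clusterPoint {M : Type*} [MetricSpace M] [CompleteSpace M]
    (W : Set M) (hW : W.Nonempty) (y : ℕ → M)
    (hqf : ∀ w ∈ W, ∃ ε : ℕ → ℝ, (∀ k, 0 ≤ ε k) ∧ Summable ε ∧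
      ∀ k, dist (y (k + 1)) w ^ 2 ≤ dist (y k) w ^ 2 + ε k)
    (p : M) (hpW : p ∈ W)
    (φ : ℕ → ℕ) (hφ : StrictMono φ)
    (hsub : Filter.Tendsto (y ∘ φ) Filter.atTop (nhds p)) :
    Filter.Tendsto y Filter.atTop (nhds p) := by
  obtain ⟨ε, hε0, hεs, hεd⟩ := hqf p hpW
  set a : ℕ → ℝ := fun k => dist (y k) p ^ 2 with ha
  have ha0 : ∀ k, 0 ≤ a k := fun k => sq_nonneg _
  -- key inequality
  have key : ∀ m n, m ≤ n → a n ≤ a m + ∑ k ∈ Finset.Ico m n, ε k := by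
    intro m n hmn
    induction n with
    | zero =>
      have : m = 0 := Nat.le_zero.mp hmn
      simp [this]
    | succ n ih =>
      rcases Nat.lt_or_ge m (n + 1) with h | h
      · have hmn' : m ≤ n := Nat.lt_succ_iff.mp h
        have h1 := ih hmn'
        have h2 := hεd n
        rw [Finset.sum_Ico_succ_top hmn']
        have : a (n + 1) ≤ a n + ε n := h2
        linarith
      · have hm : m = n + 1 := le_antisymm hmn h
        simp [hm]
  -- tail bound
  have htails : ∀ m, Summable fun k => ε (k + m) := fun m =>
    (summable_nat_add_iff m).2 hεs
  have tail : ∀ m n, m ≤ n → a n ≤ a m + ∑' k, ε (k + m) := by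
    intro m n hmn
    refine (key m n hmn).trans (add_le_add_right ?_ _)
    rw [Finset.sum_Ico_eq_sum_range]
    have := (htails m).sum_le_tsum (Finset.range (n - m)) (fun i _ => hε0 (i + m))
    simpa [add_comm] using this
  have hT : Filter.Tendsto (fun m => ∑' k, ε (k + m)) Filter.atTop (nhds 0) :=
    tendsto_sum_nat_add ε
  -- subsequence of a tends to 0
  have h1 : Filter.Tendsto (fun j => a (φ j)) Filter.atTop (nhds 0) := by
    have hd : Filter.Tendsto (fun j => dist (y (φ j)) p) Filter.atTop (nhds 0) := by
      have := hsub.dist (tendsto_const_nhds (x := p))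
      simpa using this
    have := hd.pow 2
    simpa using this
  -- a tends to 0
  have hA : Filter.Tendsto a Filter.atTop (nhds 0) := by
    rw [Metric.tendsto_atTop]
    intro δ hδ
    obtain ⟨Mi, hM⟩ := (Metric.tendsto_atTop.mp hT) (δ / 2) (by linarith)
    obtain ⟨J, hJ⟩ := (Metric.tendsto_atTop.mp h1) (δ / 2) (by linarith)
    set j := max J Mi with hj
    have hφj : Mi ≤ φ j := le_trans (le_trans (le_max_right _ _) (hφ.le_apply)) (le_refl _)
    refine ⟨φ j, fun n hn => ?_⟩
    have t1 : a (φ j) < δ / 2 := by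
      have := hJ j (le_max_left _ _)
      rwa [Real.dist_eq, sub_zero, abs_of_nonneg (ha0 _)] at this
    have t2 : (∑' k, ε (k + φ j)) < δ / 2 := by
      have := hM (φ j) hφj
      rwa [Real.dist_eq, sub_zero, abs_of_nonneg (tsum_nonneg fun k => hε0 _)] at this
    have t3 := tail (φ j) n hn
    rw [Real.dist_eq, sub_zero, abs_of_nonneg (ha0 n)]
    linarith
  -- conclude
  rw [tendsto_iff_dist_tendsto_zero]
  have := (Real.continuous_sqrt.tendsto 0).comp hA
  simp only [Function.comp, Real.sqrt_zero] at this
  convert this using 2 with n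
  exact (Real.sqrt_sq dist_nonneg).symm
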